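/- Let t = (t₁,t₂,t₃) ∈ ℕ³ and k = t₁+t₂+t₃+2. Then −∫₀¹ z·ln(z)·w(z) dz = H(t), where w(z) = Σ_{l=1}^{3} (k−t_l)·binom(k,t_l)·z^{t_l}·(1−z)^{k−t_l−1} and H(t) is the discrete entropy of t. -/

import Mathlib

open Finset intervalIntegral

/-- The `n`-th harmonic number `H_n = ∑_{i=1}^n 1/i`. -/
noncomputable def harm (n : ℕ) : ℝ := ∑ i ∈ Finset.range n, (1 : ℝ) / (i + 1)

lemma harm_succ (n : ℕ) : harm (n + 1) = harm n + 1 / (n + 1) := by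
  simp [harm, Finset.sum_range_succ]

lemma cont_pow_log (n : ℕ) (hn : 1 ≤ n) :
    Continuous fun x : ℝ => x ^ n * Real.log x := by
  obtain ⟨m, rfl⟩ := Nat.exists_eq_add_of_le hn
  have : (fun x : ℝ => x ^ (1 + m) * Real.log x)
      = fun x : ℝ => x ^ m * (x * Real.log x) := by
    funext x; ring
  rw [this]
  exact (continuous_pow m).mul Real.continuous_mul_log

lemma betaNat : ∀ b a : ℕ, ∫ x in (0:ℝ)..1, x ^ a * (1 - x) ^ b
    = (a.factorial * b.factorial : ℝ) / (a + b + 1).factorial := by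
  intro b
  induction b with
  | zero =>
    intro a
    simp only [pow_zero, mul_one, integral_pow, one_pow, ne_eq, Nat.factorial]
    have : (a.factorial:ℝ) ≠ 0 := by positivity
    simp [Nat.factorial_succ]
    field_simp
  | succ b ih =>
    intro a
    have hc : Continuous fun x : ℝ => x ^ a * (1 - x) ^ (b + 1) := by fun_prop
    have hc2 : Continuous fun x : ℝ => x ^ (a + 1) * (1 - x) ^ b := by fun_prop
    have key : ∫ x in (0:ℝ)..1,
        (x ^ a * (1 - x) ^ (b + 1) - ((b:ℝ)+1)/((a:ℝ)+1) * (x ^ (a+1) * (1 - x) ^ b)) = 0 := by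
      have hd : ∀ x ∈ Set.Ioo (0:ℝ) 1, HasDerivAt
          (fun x : ℝ => x ^ (a+1) * (1 - x) ^ (b+1) / ((a:ℝ)+1))
          (x ^ a * (1 - x) ^ (b + 1) - ((b:ℝ)+1)/((a:ℝ)+1) * (x ^ (a+1) * (1 - x) ^ b)) x := by
        intro x hx
        have h1 : HasDerivAt (fun x : ℝ => x ^ (a+1)) (((a:ℝ)+1) * x ^ a) x := by
          simpa using hasDerivAt_pow (a+1) x
        have h2 : HasDerivAt (fun x : ℝ => (1 - x) ^ (b+1))
            (-(((b:ℝ)+1) * (1 - x) ^ b)) x := by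
          have := (hasDerivAt_pow (b+1) (1 - x)).comp x
            ((hasDerivAt_const x (1:ℝ)).sub (hasDerivAt_id x))
          simpa [Function.comp_def] using this
        have := (h1.mul h2).div_const ((a:ℝ)+1)
        refine this.congr_deriv ?_
        have ha : ((a:ℝ)+1) ≠ 0 := by positivity
        field_simp
        ring
      have := integral_eq_sub_of_hasDerivAt_of_le (by norm_num)
        (Continuous.continuousOn (by fun_prop)) hd
        ((hc.sub (continuous_const.mul hc2)).intervalIntegrable 0 1)
      simpa using this
    have hsplit : ∫ x in (0:ℝ)..1,
        (x ^ a * (1 - x) ^ (b + 1) - ((b:ℝ)+1)/((a:ℝ)+1) * (x ^ (a+1) * (1 - x) ^ b))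
        = (∫ x in (0:ℝ)..1, x ^ a * (1 - x) ^ (b + 1))
          - ((b:ℝ)+1)/((a:ℝ)+1) * ∫ x in (0:ℝ)..1, x ^ (a+1) * (1 - x) ^ b := by
      rw [intervalIntegral.integral_sub (g := fun x => ((b:ℝ)+1)/((a:ℝ)+1) * (x ^ (a+1) * (1 - x) ^ b))
        (hc.intervalIntegrable 0 1)
        ((continuous_const.mul hc2).intervalIntegrable 0 1),
        intervalIntegral.integral_const_mul]
    rw [hsplit, ih (a+1)] at key
    have ha : ((a:ℝ)+1) ≠ 0 := by positivity
    have hfa : ((a+b+2).factorial : ℝ) ≠ 0 := by positivity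
    have e : (a + 1) + b + 1 = a + b + 2 := by omega
    have e2 : a + (b+1) + 1 = a + b + 2 := by omega
    rw [e] at key
    rw [e2]
    rw [sub_eq_zero] at key
    rw [key]
    rw [Nat.factorial_succ (a), Nat.factorial_succ b]
    push_cast
    field_simp

lemma cont_pow_mul_log_mul (a b : ℕ) (ha : 1 ≤ a) :
    Continuous fun x : ℝ => x ^ a * (1 - x) ^ b * Real.log x := by
  have : (fun x : ℝ => x ^ a * (1 - x) ^ b * Real.log x)
      = fun x : ℝ => (1 - x) ^ b * (x ^ a * Real.log x) := by funext x; ring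
  rw [this]
  exact (by fun_prop : Continuous fun x : ℝ => (1 - x)^b).mul (cont_pow_log a ha)

lemma Jlem : ∀ b a : ℕ, 1 ≤ a → ∫ x in (0:ℝ)..1, x ^ a * (1 - x) ^ b * Real.log x
    = (a.factorial * b.factorial : ℝ) / (a + b + 1).factorial * (harm a - harm (a + b + 1)) := by
  intro b
  induction b with
  | zero =>
    intro a ha
    have ha0 : ((a:ℝ)+1) ≠ 0 := by positivity
    have key : ∫ x in (0:ℝ)..1, x ^ a * Real.log x = -(1 / ((a:ℝ)+1)^2) := by
      have hd : ∀ x ∈ Set.Ioo (0:ℝ) 1, HasDerivAt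
          (fun x : ℝ => x ^ (a+1) * Real.log x / ((a:ℝ)+1) - x ^ (a+1) / ((a:ℝ)+1)^2)
          (x ^ a * Real.log x) x := by
        intro x hx
        have h1 : HasDerivAt (fun x : ℝ => x ^ (a+1)) (((a:ℝ)+1) * x ^ a) x := by
          simpa using hasDerivAt_pow (a+1) x
        have h2 : HasDerivAt Real.log x⁻¹ x := Real.hasDerivAt_log hx.1.ne'
        have := ((h1.mul h2).div_const ((a:ℝ)+1)).sub (h1.div_const (((a:ℝ)+1)^2))
        refine this.congr_deriv ?_
        have hx0 : x ≠ 0 := hx.1.ne'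
        field_simp
        ring
      have hcont : ContinuousOn
          (fun x : ℝ => x ^ (a+1) * Real.log x / ((a:ℝ)+1) - x ^ (a+1) / ((a:ℝ)+1)^2)
          (Set.Icc 0 1) := by
        apply Continuous.continuousOn
        exact ((cont_pow_log (a+1) (by omega)).div_const _).sub (by fun_prop)
      have := integral_eq_sub_of_hasDerivAt_of_le (by norm_num) hcont hd
        (((cont_pow_log a ha)).intervalIntegrable 0 1)
      rw [this]
      norm_num
    simp only [pow_zero, mul_one] at *
    rw [key, harm_succ]
    have hfa : (a.factorial : ℝ) ≠ 0 := by positivity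
    simp [Nat.factorial_succ]
    field_simp
  | succ b ih =>
    intro a ha
    have ha0 : ((a:ℝ)+1) ≠ 0 := by positivity
    have hcI : Continuous fun x : ℝ => x ^ a * (1 - x) ^ (b+1) * Real.log x :=
      cont_pow_mul_log_mul a (b+1) ha
    have hc2 : Continuous fun x : ℝ => x ^ (a+1) * (1 - x) ^ b * Real.log x :=
      cont_pow_mul_log_mul (a+1) b (by omega)
    have hc3 : Continuous fun x : ℝ => x ^ a * (1 - x) ^ (b+1) := by fun_prop
    have key : ∫ x in (0:ℝ)..1,
        (x ^ a * (1 - x) ^ (b+1) * Real.log x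
          - ((b:ℝ)+1)/((a:ℝ)+1) * (x ^ (a+1) * (1 - x) ^ b * Real.log x)
          + (1/((a:ℝ)+1)) * (x ^ a * (1 - x) ^ (b+1))) = 0 := by
      have hd : ∀ x ∈ Set.Ioo (0:ℝ) 1, HasDerivAt
          (fun x : ℝ => x ^ (a+1) * (1 - x) ^ (b+1) * Real.log x / ((a:ℝ)+1))
          (x ^ a * (1 - x) ^ (b+1) * Real.log x
            - ((b:ℝ)+1)/((a:ℝ)+1) * (x ^ (a+1) * (1 - x) ^ b * Real.log x)
            + (1/((a:ℝ)+1)) * (x ^ a * (1 - x) ^ (b+1))) x := by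
        intro x hx
        have h1 : HasDerivAt (fun x : ℝ => x ^ (a+1)) (((a:ℝ)+1) * x ^ a) x := by
          simpa using hasDerivAt_pow (a+1) x
        have h2 : HasDerivAt (fun x : ℝ => (1 - x) ^ (b+1))
            (-(((b:ℝ)+1) * (1 - x) ^ b)) x := by
          have := (hasDerivAt_pow (b+1) (1 - x)).comp x
            ((hasDerivAt_const x (1:ℝ)).sub (hasDerivAt_id x))
          simpa [Function.comp_def] using this
        have h3 : HasDerivAt Real.log x⁻¹ x := Real.hasDerivAt_log hx.1.ne'
        have := ((h1.mul h2).mul h3).div_const ((a:ℝ)+1)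
        refine this.congr_deriv ?_
        have hx0 : x ≠ 0 := hx.1.ne'
        simp only [Pi.mul_apply]
        field_simp
        ring
      have hcont : ContinuousOn
          (fun x : ℝ => x ^ (a+1) * (1 - x) ^ (b+1) * Real.log x / ((a:ℝ)+1))
          (Set.Icc 0 1) :=
        Continuous.continuousOn ((cont_pow_mul_log_mul (a+1) (b+1) (by omega)).div_const _)
      have hint : IntervalIntegrable (fun x : ℝ =>
          x ^ a * (1 - x) ^ (b+1) * Real.log x
            - ((b:ℝ)+1)/((a:ℝ)+1) * (x ^ (a+1) * (1 - x) ^ b * Real.log x)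
            + (1/((a:ℝ)+1)) * (x ^ a * (1 - x) ^ (b+1)))
          MeasureTheory.volume 0 1 := by
        apply Continuous.intervalIntegrable
        exact (hcI.sub (continuous_const.mul hc2)).add (continuous_const.mul hc3)
      have := integral_eq_sub_of_hasDerivAt_of_le (by norm_num) hcont hd hint
      simpa using this
    have hsplit : ∫ x in (0:ℝ)..1,
        (x ^ a * (1 - x) ^ (b+1) * Real.log x
          - ((b:ℝ)+1)/((a:ℝ)+1) * (x ^ (a+1) * (1 - x) ^ b * Real.log x)
          + (1/((a:ℝ)+1)) * (x ^ a * (1 - x) ^ (b+1)))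
        = (∫ x in (0:ℝ)..1, x ^ a * (1 - x) ^ (b+1) * Real.log x)
          - ((b:ℝ)+1)/((a:ℝ)+1) * (∫ x in (0:ℝ)..1, x ^ (a+1) * (1 - x) ^ b * Real.log x)
          + (1/((a:ℝ)+1)) * ∫ x in (0:ℝ)..1, x ^ a * (1 - x) ^ (b+1) := by
      rw [intervalIntegral.integral_add
            (f := fun x => x ^ a * (1 - x) ^ (b+1) * Real.log x
              - ((b:ℝ)+1)/((a:ℝ)+1) * (x ^ (a+1) * (1 - x) ^ b * Real.log x))
            (g := fun x => (1/((a:ℝ)+1)) * (x ^ a * (1 - x) ^ (b+1)))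
            ((hcI.sub (continuous_const.mul hc2)).intervalIntegrable 0 1)
            ((continuous_const.mul hc3).intervalIntegrable 0 1),
          intervalIntegral.integral_sub
            (g := fun x => ((b:ℝ)+1)/((a:ℝ)+1) * (x ^ (a+1) * (1 - x) ^ b * Real.log x))
            (hcI.intervalIntegrable 0 1)
            ((continuous_const.mul hc2).intervalIntegrable 0 1),
          intervalIntegral.integral_const_mul, intervalIntegral.integral_const_mul]
    rw [hsplit, ih (a+1) (by omega), betaNat (b+1) a] at key
    have e : (a + 1) + b + 1 = a + b + 2 := by omega
    have e2 : a + (b+1) + 1 = a + b + 2 := by omega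
    rw [e, e2] at key
    rw [e2]
    have hfa : ((a+b+2).factorial : ℝ) ≠ 0 := by positivity
    have := sub_eq_zero.mp (by linarith [key] :
      ((∫ x in (0:ℝ)..1, x ^ a * (1 - x) ^ (b+1) * Real.log x)
        - (((b:ℝ)+1)/((a:ℝ)+1) * ((((a+1).factorial * b.factorial : ℝ) / (a+b+2).factorial)
            * (harm (a+1) - harm (a+b+2)))
          - (1/((a:ℝ)+1)) * ((a.factorial * (b+1).factorial : ℝ) / (a+b+2).factorial))) = 0)
    rw [this, harm_succ a, Nat.factorial_succ a, Nat.factorial_succ b]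
    push_cast
    field_simp
    ring

lemma coeff_nat (k t : ℕ) (h : t + 2 ≤ k) :
    (k - t) * k.choose t * (t+1).factorial * (k - t - 1).factorial
      = (t+1) * k.factorial := by
  have hm : k - t = (k - t - 1) + 1 := by omega
  have h1 : k.choose t * t.factorial * (k - t).factorial = k.factorial :=
    Nat.choose_mul_factorial_mul_factorial (by omega)
  calc (k - t) * k.choose t * (t+1).factorial * (k - t - 1).factorial
      = (t+1) * (k.choose t * t.factorial * ((k - t) * (k - t - 1).factorial)) := by
        rw [Nat.factorial_succ]; ring
    _ = (t+1) * (k.choose t * t.factorial * (k - t).factorial) := by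
        rw [hm, Nat.factorial_succ]; simp
    _ = (t+1) * k.factorial := by rw [h1]

lemma term_eq (k t : ℕ) (h : t + 2 ≤ k) :
    ∫ z in (0:ℝ)..1, z * Real.log z
        * (((k - t : ℕ):ℝ) * (k.choose t : ℝ) * z ^ t * (1 - z) ^ (k - t - 1))
      = -(((t:ℝ)+1)/((k:ℝ)+1) * (harm (k+1) - harm (t+1))) := by
  have hrw : ∀ z : ℝ, z * Real.log z
      * (((k - t : ℕ):ℝ) * (k.choose t : ℝ) * z ^ t * (1 - z) ^ (k - t - 1))
      = (((k - t : ℕ):ℝ) * (k.choose t : ℝ))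
        * (z ^ (t+1) * (1 - z) ^ (k - t - 1) * Real.log z) := by
    intro z; rw [pow_succ]; ring
  rw [intervalIntegral.integral_congr (fun z _ => hrw z),
    intervalIntegral.integral_const_mul, Jlem (k - t - 1) (t+1) (by omega)]
  have e : (t+1) + (k - t - 1) + 1 = k + 1 := by omega
  rw [e]
  have hk : ((k:ℝ)+1) ≠ 0 := by positivity
  have hfk : (k.factorial : ℝ) ≠ 0 := by positivity
  have hc := coeff_nat k t h
  have hcR : ((k - t : ℕ):ℝ) * (k.choose t : ℝ) * (t+1).factorial * (k - t - 1).factorial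
      = ((t:ℝ)+1) * k.factorial := by exact_mod_cast hc
  rw [Nat.factorial_succ k]
  push_cast
  field_simp
  linear_combination (harm (t + 1) - harm (k + 1)) * hcR

/-- The discrete entropy `H(t)` of `t = (t₁,t₂,t₃)` with `k = t₁+t₂+t₃+2`. -/
noncomputable def Hdisc (t1 t2 t3 : ℕ) : ℝ :=
  ((t1 : ℝ) + 1) / ((t1 : ℝ) + t2 + t3 + 3) * (harm (t1 + t2 + t3 + 3) - harm (t1 + 1))
  + ((t2 : ℝ) + 1) / ((t1 : ℝ) + t2 + t3 + 3) * (harm (t1 + t2 + t3 + 3) - harm (t2 + 1))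
  + ((t3 : ℝ) + 1) / ((t1 : ℝ) + t2 + t3 + 3) * (harm (t1 + t2 + t3 + 3) - harm (t3 + 1))

/-- The shape function
`w(z) = ∑_{l=1}^3 (k−t_l) binom(k,t_l) z^{t_l} (1−z)^{k−t_l−1}`, `k = t₁+t₂+t₃+2`. -/
noncomputable def shapeW (t1 t2 t3 : ℕ) (z : ℝ) : ℝ :=
  (((t1 + t2 + t3 + 2) - t1 : ℕ) : ℝ) * ((t1 + t2 + t3 + 2).choose t1 : ℝ)
      * z ^ t1 * (1 - z) ^ ((t1 + t2 + t3 + 2) - t1 - 1)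
  + (((t1 + t2 + t3 + 2) - t2 : ℕ) : ℝ) * ((t1 + t2 + t3 + 2).choose t2 : ℝ)
      * z ^ t2 * (1 - z) ^ ((t1 + t2 + t3 + 2) - t2 - 1)
  + (((t1 + t2 + t3 + 2) - t3 : ℕ) : ℝ) * ((t1 + t2 + t3 + 2).choose t3 : ℝ)
      * z ^ t3 * (1 - z) ^ ((t1 + t2 + t3 + 2) - t3 - 1)

/-- `−∫₀¹ z ln(z) w(z) dz = H(t)`: the logarithmic moment of the shape function equals the
discrete entropy. -/
theorem stmt14 (t1 t2 t3 : ℕ) :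
    -∫ z in (0 : ℝ)..1, z * Real.log z * shapeW t1 t2 t3 z = Hdisc t1 t2 t3 := by
  set k := t1 + t2 + t3 + 2 with hk
  have hcterm : ∀ t : ℕ, Continuous fun z : ℝ => z * Real.log z
      * (((k - t : ℕ):ℝ) * (k.choose t : ℝ) * z ^ t * (1 - z) ^ (k - t - 1)) :=
    fun t => Real.continuous_mul_log.mul (by fun_prop)
  have hsplit : (∫ z in (0:ℝ)..1, z * Real.log z * shapeW t1 t2 t3 z)
      = (∫ z in (0:ℝ)..1, z * Real.log z
          * (((k - t1 : ℕ):ℝ) * (k.choose t1 : ℝ) * z ^ t1 * (1 - z) ^ (k - t1 - 1)))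
        + (∫ z in (0:ℝ)..1, z * Real.log z
          * (((k - t2 : ℕ):ℝ) * (k.choose t2 : ℝ) * z ^ t2 * (1 - z) ^ (k - t2 - 1)))
        + (∫ z in (0:ℝ)..1, z * Real.log z
          * (((k - t3 : ℕ):ℝ) * (k.choose t3 : ℝ) * z ^ t3 * (1 - z) ^ (k - t3 - 1))) := by
    rw [← intervalIntegral.integral_add ((hcterm t1).intervalIntegrable 0 1)
        ((hcterm t2).intervalIntegrable 0 1),
      ← intervalIntegral.integral_add
        (f := fun z => z * Real.log z
            * (((k - t1 : ℕ):ℝ) * (k.choose t1 : ℝ) * z ^ t1 * (1 - z) ^ (k - t1 - 1))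
          + z * Real.log z
            * (((k - t2 : ℕ):ℝ) * (k.choose t2 : ℝ) * z ^ t2 * (1 - z) ^ (k - t2 - 1)))
        (((hcterm t1).add (hcterm t2)).intervalIntegrable 0 1)
        ((hcterm t3).intervalIntegrable 0 1)]
    apply intervalIntegral.integral_congr
    intro z _
    simp only [shapeW, hk]
    ring
  rw [hsplit, term_eq k t1 (by omega), term_eq k t2 (by omega), term_eq k t3 (by omega)]
  have e : k + 1 = t1 + t2 + t3 + 3 := by omega
  rw [e]
  simp only [Hdisc]
  have : ((k:ℝ)+1) = (t1:ℝ) + t2 + t3 + 3 := by rw [hk]; push_cast; ring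
  rw [this]
  ring
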